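/- If 𝒞 ⊆ 𝒫(X) is a d-maximum set system on a finite set X, then for any C₁, C₂ ∈ 𝒞, the Hamming distance |C₁ Δ C₂| equals the graph distance between C₁ and C₂ in the one-inclusion graph of 𝒞. In particular the one-inclusion graph of a finite maximum class is connected. -/

import Mathlib

open Set

variable {α : Type*}

/-- The trace of a set system on a set `A`. -/
def trace (𝒞 : Set (Set α)) (A : Set α) : Set (Set α) := {s | ∃ C ∈ 𝒞, s = C ∩ A}

/-- `∑_{i=0}^{d} (n choose i)`. -/
def binLe (n d : ℕ) : ℕ := ∑ i ∈ Finset.range (d + 1), n.choose i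

/-- `𝒞` shatters `A`. -/
def shatters (𝒞 : Set (Set α)) (A : Set α) : Prop := ∀ B ⊆ A, ∃ C ∈ 𝒞, C ∩ A = B

/-- `𝒞` is a `d`-maximum set system. -/
def isMaximum (𝒞 : Set (Set α)) (d : ℕ) : Prop :=
  ∀ A : Set α, A.Finite → (trace 𝒞 A).ncard = binLe A.ncard d

/-- There is a ladder of length `n` for `𝒞`. -/
def hasLadder (𝒞 : Set (Set α)) (n : ℕ) : Prop :=
  ∃ (x : Fin n → α) (B : Fin n → Set α), (∀ j, B j ∈ 𝒞) ∧ ∀ i j, x i ∈ B j ↔ i < j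

/-- The one-inclusion graph of a set system. -/
def oneInclusionGraph (𝒞 : Set (Set α)) : SimpleGraph 𝒞 where
  Adj C₁ C₂ := (symmDiff (C₁ : Set α) (C₂ : Set α)).ncard = 1
  symm := by
    constructor
    intro C₁ C₂ h
    rwa [symmDiff_comm]
  loopless := by
    constructor
    intro C h
    simp [symmDiff_self] at h

/-! ### Auxiliary development -/

/-- The collection of sets shattered by `𝒞`. -/
def SH (𝒞 : Set (Set α)) : Set (Set α) := {S | shatters 𝒞 S}

lemma shatters_mono {𝒞 𝒟 : Set (Set α)} (h : 𝒞 ⊆ 𝒟) {A : Set α}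
    (hA : shatters 𝒞 A) : shatters 𝒟 A := by
  intro B hB
  obtain ⟨C, hC, hCB⟩ := hA B hB
  exact ⟨C, h hC, hCB⟩

lemma shatters_empty {𝒞 : Set (Set α)} {C : Set α} (h : C ∈ 𝒞) : shatters 𝒞 ∅ := by
  intro B hB
  exact ⟨C, h, by simpa [Set.subset_empty_iff.mp hB]⟩

/-- shattered sets of the side `z ∉ ·` avoid `z`. -/
lemma not_mem_of_shatters₀ {𝒞 : Set (Set α)} {z : α} {S : Set α}
    (h : shatters {C ∈ 𝒞 | z ∉ C} S) : z ∉ S := by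
  intro hz
  obtain ⟨C, hC, hCS⟩ := h S subset_rfl
  rw [← hCS] at hz
  exact hC.2 hz.1
  
lemma not_mem_of_shatters₁ {𝒞 : Set (Set α)} {z : α} {S : Set α}
    (h : shatters {C ∈ 𝒞 | z ∈ C} S) : z ∉ S := by
  intro hz
  obtain ⟨C, hC, hCS⟩ := h ∅ (empty_subset S)
  have : z ∈ C ∩ S := ⟨hC.2, hz⟩
  simp [hCS] at this

lemma shatters_insert {𝒞 : Set (Set α)} {z : α} {S : Set α}
    (h0 : shatters {C ∈ 𝒞 | z ∉ C} S) (h1 : shatters {C ∈ 𝒞 | z ∈ C} S) :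
    shatters 𝒞 (insert z S) := by
  have hzS : z ∉ S := not_mem_of_shatters₀ h0
  intro B hB
  by_cases hzB : z ∈ B
  · obtain ⟨C, hC, hCS⟩ := h1 (B \ {z}) (by
      intro b hb
      have := hB hb.1
      rcases this with h | h
      · exact absurd h hb.2
      · exact h)
    refine ⟨C, hC.1, ?_⟩
    rw [Set.inter_insert_of_mem hC.2, hCS]
    ext b
    simp only [Set.mem_insert_iff, Set.mem_diff, Set.mem_singleton_iff]
    constructor
    · rintro (rfl | h) ; exact hzB; exact h.1
    · intro hb; by_cases hbz : b = z; exact Or.inl hbz; exact Or.inr ⟨hb, hbz⟩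
  · obtain ⟨C, hC, hCS⟩ := h0 B (by
      intro b hb
      rcases hB hb with h | h
      · exact absurd (h ▸ hb) hzB
      · exact h)
    refine ⟨C, hC.1, ?_⟩
    rw [Set.inter_insert_of_notMem hC.2, hCS]

/-- Key counting step for Pajor's lemma. -/
lemma sh_split [Fintype α] (𝒞 : Set (Set α)) (z : α) :
    (SH {C ∈ 𝒞 | z ∉ C}).ncard + (SH {C ∈ 𝒞 | z ∈ C}).ncard ≤ (SH 𝒞).ncard := by
  set S0 := SH {C ∈ 𝒞 | z ∉ C}
  set S1 := SH {C ∈ 𝒞 | z ∈ C}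
  have hsub0 : S0 ⊆ SH 𝒞 := fun S hS => shatters_mono (fun C hC => hC.1) hS
  have hsub1 : S1 ⊆ SH 𝒞 := fun S hS => shatters_mono (fun C hC => hC.1) hS
  set J := (insert z) '' (S0 ∩ S1) with hJ
  have hJsub : J ⊆ SH 𝒞 := by
    rintro _ ⟨S, hS, rfl⟩
    exact shatters_insert hS.1 hS.2
  have hJcard : J.ncard = (S0 ∩ S1).ncard := by
    apply ncard_image_of_injOn
    intro S hS T hT hST
    have hzs : z ∉ S := not_mem_of_shatters₀ hS.1
    have hzt : z ∉ T := not_mem_of_shatters₀ hT.1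
    ext b
    constructor
    · intro hb
      have : b ∈ insert z T := hST ▸ Set.mem_insert_iff.mpr (Or.inr hb)
      rcases this with rfl | h
      · exact absurd hb hzs
      · exact h
    · intro hb
      have : b ∈ insert z S := hST ▸ Set.mem_insert_iff.mpr (Or.inr hb)
      rcases this with rfl | h
      · exact absurd hb hzt
      · exact h
  have hdisj : Disjoint (S0 ∪ S1) J := by
    rw [Set.disjoint_left]
    rintro S hS ⟨T, _, rfl⟩
    have : z ∈ insert z T := Set.mem_insert z T
    rcases hS with h | h
    · exact not_mem_of_shatters₀ h this
    · exact not_mem_of_shatters₁ h this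
  calc S0.ncard + S1.ncard = (S0 ∪ S1).ncard + (S0 ∩ S1).ncard :=
        (ncard_union_add_ncard_inter S0 S1 (toFinite _) (toFinite _)).symm
    _ = (S0 ∪ S1).ncard + J.ncard := by rw [hJcard]
    _ = ((S0 ∪ S1) ∪ J).ncard := (ncard_union_eq hdisj (toFinite _) (toFinite _)).symm
    _ ≤ (SH 𝒞).ncard := ncard_le_ncard (Set.union_subset (Set.union_subset hsub0 hsub1) hJsub)
        (toFinite _)

lemma split_partition (𝒞 : Set (Set α)) (z : α) :
    {C ∈ 𝒞 | z ∉ C} ∪ {C ∈ 𝒞 | z ∈ C} = 𝒞 := by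
  ext C; by_cases h : z ∈ C <;> simp [h]

lemma split_disjoint (𝒞 : Set (Set α)) (z : α) :
    Disjoint {C ∈ 𝒞 | z ∉ C} {C ∈ 𝒞 | z ∈ C} := by
  rw [Set.disjoint_left]; rintro C h1 h2; exact h1.2 h2.2

lemma split_ncard [Fintype α] (𝒞 : Set (Set α)) (z : α) :
    {C ∈ 𝒞 | z ∉ C}.ncard + {C ∈ 𝒞 | z ∈ C}.ncard = 𝒞.ncard := by
  rw [← ncard_union_eq (split_disjoint 𝒞 z) (toFinite _) (toFinite _), split_partition]

/-- Pajor's lemma. -/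
lemma pajor [Fintype α] (𝒞 : Set (Set α)) : 𝒞.ncard ≤ (SH 𝒞).ncard := by
  generalize hn : 𝒞.ncard = n
  induction n using Nat.strong_induction_on generalizing 𝒞 with
  | _ n ih =>
    rcases Nat.lt_or_ge n 2 with hn2 | hn2
    · interval_cases n
      · simp
      · obtain ⟨C, hC⟩ : 𝒞.Nonempty := by
          rw [← ncard_pos (toFinite _), hn]; norm_num
        have : (SH 𝒞).Nonempty := ⟨∅, shatters_empty hC⟩
        have := (ncard_pos (s := SH 𝒞) (toFinite _)).mpr this
        omega
    · obtain ⟨C, C', hC, hC', hne⟩ := (one_lt_ncard_iff (toFinite 𝒞)).mp (by omega)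
      obtain ⟨z, hz⟩ := Set.symmDiff_nonempty.mpr hne
      rw [Set.mem_symmDiff] at hz
      have h0ne : {E ∈ 𝒞 | z ∉ E}.Nonempty := by
        rcases hz with ⟨h1, h2⟩ | ⟨h1, h2⟩
        exacts [⟨C', hC', h2⟩, ⟨C, hC, h2⟩]
      have h1ne : {E ∈ 𝒞 | z ∈ E}.Nonempty := by
        rcases hz with ⟨h1, h2⟩ | ⟨h1, h2⟩
        exacts [⟨C, hC, h1⟩, ⟨C', hC', h1⟩]
      have hcard := split_ncard 𝒞 z
      have hp0 := (ncard_pos (s := {E ∈ 𝒞 | z ∉ E}) (toFinite _)).mpr h0ne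
      have hp1 := (ncard_pos (s := {E ∈ 𝒞 | z ∈ E}) (toFinite _)).mpr h1ne
      have ih0 := ih {E ∈ 𝒞 | z ∉ E}.ncard (by omega) _ rfl
      have ih1 := ih {E ∈ 𝒞 | z ∈ E}.ncard (by omega) _ rfl
      have := sh_split 𝒞 z
      omega

/-- `𝒞` is shattering-extremal. -/
def extremal (𝒞 : Set (Set α)) : Prop := 𝒞.ncard = (SH 𝒞).ncard

lemma extremal_split [Fintype α] {𝒞 : Set (Set α)} (h : extremal 𝒞) (z : α) :
    extremal {C ∈ 𝒞 | z ∉ C} ∧ extremal {C ∈ 𝒞 | z ∈ C} := by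
  have p0 := pajor {C ∈ 𝒞 | z ∉ C}
  have p1 := pajor {C ∈ 𝒞 | z ∈ C}
  have hs := sh_split 𝒞 z
  have hc := split_ncard 𝒞 z
  unfold extremal at *
  omega

lemma extremal_side [Fintype α] {𝒞 : Set (Set α)} (h : extremal 𝒞) (z : α) (P : Set α) :
    extremal {E ∈ 𝒞 | z ∈ E ↔ z ∈ P} := by
  by_cases hz : z ∈ P
  · have he : {E ∈ 𝒞 | z ∈ E ↔ z ∈ P} = {E ∈ 𝒞 | z ∈ E} := by ext E; simp [hz]
    rw [he]; exact (extremal_split h z).2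
  · have he : {E ∈ 𝒞 | z ∈ E ↔ z ∈ P} = {E ∈ 𝒞 | z ∉ E} := by ext E; simp [hz]
    rw [he]; exact (extremal_split h z).1

lemma symmDiff_singleton_of_mem {A : Set α} {x : α} (hx : x ∈ A) :
    symmDiff A {x} = A \ {x} := by
  ext y
  simp only [Set.mem_symmDiff, Set.mem_diff, Set.mem_singleton_iff]
  by_cases hy : y = x
  · subst hy; tauto
  · tauto

lemma symmDiff_pair {C C' : Set α} {x : α} :
    symmDiff C (symmDiff C' {x}) = symmDiff (symmDiff C C') {x} :=
  (symmDiff_assoc C C' {x}).symm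

/-- The key lemma: in an extremal class, from `C` one can take a step towards `C'`. -/
lemma exists_step [Fintype α] :
    ∀ n (𝒞 : Set (Set α)) (C C' : Set α),
      𝒞.ncard + (symmDiff C C').ncard ≤ n → extremal 𝒞 → C ∈ 𝒞 → C' ∈ 𝒞 → C ≠ C' →
      ∃ x ∈ symmDiff C C', symmDiff C {x} ∈ 𝒞 := by
  intro n
  induction n with
  | zero =>
    intro 𝒞 C C' hle _ hC _ _
    have := (ncard_pos (s := 𝒞) (toFinite _)).mpr ⟨C, hC⟩
    omega
  | succ n ih =>
    intro 𝒞 C C' hle hext hC hC' hne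
    by_contra hcon
    push_neg at hcon
    set A := symmDiff C C' with hA
    have hAne : A.Nonempty := Set.symmDiff_nonempty.mpr hne
    -- Step 1 : every member of 𝒞 agrees with C outside A
    have step1 : ∀ D ∈ 𝒞, symmDiff D C ⊆ A := by
      intro D hD
      by_contra hsub
      obtain ⟨z, hzDC, hzA⟩ : ∃ z, z ∈ symmDiff D C ∧ z ∉ A := by
        rw [Set.not_subset] at hsub; tauto
      set 𝒮 := {E ∈ 𝒞 | z ∈ E ↔ z ∈ C} with h𝒮
      have hCS : C ∈ 𝒮 := ⟨hC, Iff.rfl⟩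
      have hC'S : C' ∈ 𝒮 := by
        refine ⟨hC', ?_⟩
        rw [Set.mem_symmDiff] at hzA
        tauto
      have hDS : D ∉ 𝒮 := by
        rw [Set.mem_symmDiff] at hzDC
        rintro ⟨-, hiff⟩; tauto
      have hss : 𝒮 ⊂ 𝒞 := ⟨fun E hE => hE.1, fun hsup => hDS (hsup hD)⟩
      have hlt : 𝒮.ncard < 𝒞.ncard := ncard_lt_ncard hss (toFinite _)
      obtain ⟨x, hx1, hx2⟩ := ih 𝒮 C C' (by rw [← hA]; omega) (extremal_side hext z C) hCS hC'S hne
      exact hcon x hx1 hx2.1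
    by_cases hbig : ∃ D ∈ 𝒞, D ≠ C ∧ D ≠ C'
    · -- Step 2
      obtain ⟨D, hD, hDC, hDC'⟩ := hbig
      obtain ⟨z, hz⟩ := Set.symmDiff_nonempty.mpr hDC
      have hzA : z ∈ A := step1 D hD hz
      set 𝒮 := {E ∈ 𝒞 | z ∈ E ↔ z ∈ C'} with h𝒮
      have hC'S : C' ∈ 𝒮 := ⟨hC', Iff.rfl⟩
      have hDS : D ∈ 𝒮 := by
        refine ⟨hD, ?_⟩
        rw [Set.mem_symmDiff] at hz hzA
        tauto
      have hCS : C ∉ 𝒮 := by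
        rw [Set.mem_symmDiff] at hzA
        rintro ⟨-, hiff⟩; tauto
      have hlt : 𝒮.ncard < 𝒞.ncard :=
        ncard_lt_ncard ⟨fun E hE => hE.1, fun hsup => hCS (hsup hC)⟩ (toFinite _)
      have hsubA : symmDiff C' D ⊆ A := by
        intro y hy
        have htri : symmDiff C' D ⊆ symmDiff C' C ∪ symmDiff C D := symmDiff_triangle C' C D
        rcases htri hy with h | h
        · rwa [symmDiff_comm] at h
        · exact step1 D hD (by rwa [symmDiff_comm])
      have hcard : (symmDiff C' D).ncard ≤ A.ncard := ncard_le_ncard hsubA (toFinite _)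
      obtain ⟨x, hx1, hx2⟩ := ih 𝒮 C' D (by omega) (extremal_side hext z C')
        hC'S hDS (fun h => hDC' h.symm)
      have hxA : x ∈ A := hsubA hx1
      have hC'' : symmDiff C' {x} ∈ 𝒞 := hx2.1
      have hdiff : symmDiff C (symmDiff C' {x}) = A \ {x} := by
        rw [symmDiff_pair, ← hA, symmDiff_singleton_of_mem hxA]
      by_cases hAx : A = {x}
      · have : symmDiff C {x} = C' := by
          rw [← hAx, hA, symmDiff_symmDiff_cancel_left]
        exact hcon x hxA (this ▸ hC')
      · have hne2 : C ≠ symmDiff C' {x} := by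
          intro h
          have : A \ {x} = ∅ := by rw [← hdiff, ← h, symmDiff_self]; rfl
          have : A ⊆ {x} := by
            rw [Set.diff_eq_empty] at this; exact this
          exact hAx (Set.Subset.antisymm this (Set.singleton_subset_iff.mpr hxA))
        have hcount : (symmDiff C (symmDiff C' {x})).ncard < A.ncard := by
          rw [hdiff]
          exact ncard_diff_singleton_lt_of_mem hxA (toFinite _)
        obtain ⟨x', hx'1, hx'2⟩ := ih 𝒞 C (symmDiff C' {x}) (by omega) hext hC hC'' hne2
        have : x' ∈ A := (hdiff ▸ hx'1).1
        exact hcon x' this hx'2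
    · -- Step 3 : 𝒞 = {C, C'}
      push_neg at hbig
      have h𝒞 : 𝒞 = {C, C'} := by
        apply Set.Subset.antisymm
        · intro D hD
          by_cases h1 : D = C
          · exact Or.inl h1
          · exact Or.inr (hbig D hD h1)
        · rintro D (rfl | rfl) <;> assumption
      have hSH : SH 𝒞 = insert ∅ ((fun x => ({x} : Set α)) '' A) := by
        ext S
        constructor
        · intro hS
          have hSsub : S ⊆ A := by
            intro s hs
            by_contra hsA
            obtain ⟨E, hE, hES⟩ := hS (symmDiff (C ∩ S) ({s} : Set α))
              (symmDiff_le_sup.trans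
                (Set.union_subset Set.inter_subset_right (Set.singleton_subset_iff.mpr hs)))
            have hsame : s ∈ C ↔ s ∈ C' := by
              rw [hA, Set.mem_symmDiff] at hsA; tauto
            have hEs : (s ∈ E ∩ S) ↔ ¬ (s ∈ C ∩ S) := by
              rw [hES, Set.mem_symmDiff]
              simp [hs]
            rw [h𝒞] at hE
            simp only [Set.mem_insert_iff, Set.mem_singleton_iff] at hE
            rcases hE with rfl | rfl
            · simp only [Set.mem_inter_iff, hs, and_true] at hEs; tauto
            · simp only [Set.mem_inter_iff, hs, and_true] at hEs; tauto
          have hcard1 : ∀ s ∈ S, ∀ t ∈ S, s = t := by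
            intro s hs t ht
            by_contra hst
            obtain ⟨E1, hE1, hES1⟩ := hS (symmDiff (C ∩ S) ({s} : Set α))
              (symmDiff_le_sup.trans
                (Set.union_subset Set.inter_subset_right (Set.singleton_subset_iff.mpr hs)))
            obtain ⟨E2, hE2, hES2⟩ := hS (symmDiff (C ∩ S) ({t} : Set α))
              (symmDiff_le_sup.trans
                (Set.union_subset Set.inter_subset_right (Set.singleton_subset_iff.mpr ht)))
            have h1 : E1 ≠ C := by
              intro h; subst h
              have : (s ∈ E1 ∩ S) ↔ ¬ (s ∈ E1 ∩ S) := by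
                nth_rewrite 1 [hES1]
                rw [Set.mem_symmDiff]; simp [hs]
              tauto
            have h2 : E2 ≠ C := by
              intro h; subst h
              have : (t ∈ E2 ∩ S) ↔ ¬ (t ∈ E2 ∩ S) := by
                nth_rewrite 1 [hES2]
                rw [Set.mem_symmDiff]; simp [ht]
              tauto
            rw [h𝒞] at hE1 hE2
            simp only [Set.mem_insert_iff, Set.mem_singleton_iff] at hE1 hE2
            have hE1' : E1 = C' := by tauto
            have hE2' : E2 = C' := by tauto
            have : symmDiff (C ∩ S) ({s} : Set α) = symmDiff (C ∩ S) ({t} : Set α) := by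
              rw [← hES1, ← hES2, hE1', hE2']
            have hss : (s ∈ symmDiff (C ∩ S) ({s} : Set α)) ↔ ¬ s ∈ C ∩ S := by
              rw [Set.mem_symmDiff]; simp
            have hst' : (s ∈ symmDiff (C ∩ S) ({t} : Set α)) ↔ s ∈ C ∩ S := by
              rw [Set.mem_symmDiff]; simp [hst]
            rw [this, hst'] at hss
            tauto
          rcases Set.eq_empty_or_nonempty S with rfl | ⟨s, hs⟩
          · exact Or.inl rfl
          · right
            refine ⟨s, hSsub hs, ?_⟩
            exact (Set.eq_singleton_iff_unique_mem.mpr ⟨hs, fun t ht => hcard1 t ht s hs⟩).symm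
        · rintro (rfl | ⟨x, hxA, rfl⟩)
          · intro B hB
            rw [Set.subset_empty_iff] at hB
            exact ⟨C, by rw [h𝒞]; exact Or.inl rfl, by simp [hB]⟩
          · intro B hB
            have hxCC' : (x ∈ C ∧ x ∉ C') ∨ (x ∈ C' ∧ x ∉ C) := by
              rw [hA, Set.mem_symmDiff] at hxA; exact hxA
            rcases Set.subset_singleton_iff_eq.mp hB with rfl | rfl
            · rcases hxCC' with ⟨h1, h2⟩ | ⟨h1, h2⟩
              · exact ⟨C', by rw [h𝒞]; exact Or.inr rfl, by simp [h2]⟩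
              · exact ⟨C, by rw [h𝒞]; exact Or.inl rfl, by simp [h2]⟩
            · rcases hxCC' with ⟨h1, h2⟩ | ⟨h1, h2⟩
              · exact ⟨C, by rw [h𝒞]; exact Or.inl rfl, by simp [h1]⟩
              · exact ⟨C', by rw [h𝒞]; exact Or.inr rfl, by simp [h1]⟩
      have hSHcard : (SH 𝒞).ncard = 1 + A.ncard := by
        rw [hSH, ncard_insert_of_notMem (by
          rintro ⟨x, -, h⟩
          exact (Set.singleton_ne_empty x) h) (toFinite _)]
        rw [ncard_image_of_injOn (fun x _ y _ h => Set.singleton_eq_singleton_iff.mp h)]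
        omega
      have h2 : 𝒞.ncard = 2 := by rw [h𝒞]; exact Set.ncard_pair hne
      have hA1 : A.ncard = 1 := by
        have := hext
        unfold extremal at this
        omega
      obtain ⟨x, hx⟩ := Set.ncard_eq_one.mp hA1
      have : symmDiff C {x} = C' := by
        rw [← hx, hA, symmDiff_symmDiff_cancel_left]
      exact hcon x (hx ▸ rfl) (this ▸ hC')

lemma binLe_of_le {n d : ℕ} (h : n ≤ d) : binLe n d = 2 ^ n := by
  unfold binLe
  rw [← Nat.sum_range_choose n]
  apply (Finset.sum_subset ?_ ?_).symm
  · intro i hi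
    rw [Finset.mem_range] at *
    omega
  · intro i _ hi
    rw [Finset.mem_range] at hi
    exact Nat.choose_eq_zero_of_lt (by omega)

lemma binLe_lt {n d : ℕ} (h : d < n) : binLe n d < 2 ^ n := by
  have hsub : insert n (Finset.range (d + 1)) ⊆ Finset.range (n + 1) := by
    intro i hi
    rcases Finset.mem_insert.mp hi with h | hi
    · rw [h]; exact Finset.self_mem_range_succ n
    · rw [Finset.mem_range] at *; omega
  have hn : n ∉ Finset.range (d + 1) := by rw [Finset.mem_range]; omega
  have : ∑ i ∈ insert n (Finset.range (d + 1)), n.choose i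
      ≤ ∑ i ∈ Finset.range (n + 1), n.choose i := Finset.sum_le_sum_of_subset hsub
  rw [Finset.sum_insert hn, Nat.sum_range_choose, Nat.choose_self] at this
  unfold binLe
  omega

lemma ncard_powerset [Fintype α] (S : Set α) :
    {B : Set α | B ⊆ S}.ncard = 2 ^ S.ncard := by
  classical
  have h : {B : Set α | B ⊆ S} =
      (fun t : Finset α => (t : Set α)) '' ↑(S.toFinset.powerset) := by
    ext B
    simp only [Set.mem_setOf_eq, Set.mem_image, Finset.mem_coe, Finset.mem_powerset]
    constructor
    · intro hB
      exact ⟨B.toFinset, Set.toFinset_subset_toFinset.mpr hB, Set.coe_toFinset B⟩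
    · rintro ⟨t, ht, rfl⟩
      rw [← Set.coe_toFinset S]
      exact_mod_cast ht
  rw [h, ncard_image_of_injOn (fun s _ t _ h => Finset.coe_injective h),
    ncard_coe_finset, Finset.card_powerset, Set.ncard_eq_toFinset_card']

lemma ncard_small_sets [Fintype α] (d : ℕ) :
    {S : Set α | S.ncard ≤ d}.ncard = binLe (Fintype.card α) d := by
  classical
  have h : {S : Set α | S.ncard ≤ d} =
      (fun t : Finset α => (t : Set α)) ''
        ↑((Finset.univ : Finset (Finset α)).filter (fun t => t.card ≤ d)) := by
    ext S
    simp only [Set.mem_setOf_eq, Set.mem_image, Finset.mem_coe, Finset.mem_filter,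
      Finset.mem_univ, true_and]
    constructor
    · intro hS
      refine ⟨S.toFinset, ?_, Set.coe_toFinset S⟩
      rwa [← Set.ncard_eq_toFinset_card']
    · rintro ⟨t, ht, rfl⟩
      rwa [ncard_coe_finset]
  rw [h, ncard_image_of_injOn (fun s _ t _ h => Finset.coe_injective h), ncard_coe_finset]
  have h2 : (Finset.univ : Finset (Finset α)).filter (fun t => t.card ≤ d) =
      (Finset.range (d + 1)).biUnion (fun i => Finset.powersetCard i Finset.univ) := by
    ext t
    simp only [Finset.mem_filter, Finset.mem_univ, true_and, Finset.mem_biUnion,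
      Finset.mem_range, Finset.mem_powersetCard, Finset.subset_univ]
    constructor
    · intro h; exact ⟨t.card, by omega, rfl⟩
    · rintro ⟨i, hi, -, rfl⟩; omega
  rw [h2, Finset.card_biUnion]
  · unfold binLe
    apply Finset.sum_congr rfl
    intro i _
    rw [Finset.card_powersetCard, Finset.card_univ]
  · intro i _ j _ hij
    rw [Function.onFun, Finset.disjoint_left]
    intro t ht1 ht2
    rw [Finset.mem_powersetCard] at ht1 ht2
    exact hij (ht1.2 ▸ ht2.2.symm ▸ rfl)

lemma trace_univ (𝒞 : Set (Set α)) : trace 𝒞 univ = 𝒞 := by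
  ext s
  simp only [trace, Set.mem_setOf_eq, Set.inter_univ]
  constructor
  · rintro ⟨C, hC, rfl⟩; exact hC
  · intro h; exact ⟨s, h, rfl⟩

lemma maximum_extremal [Fintype α] {𝒞 : Set (Set α)} {d : ℕ} (hmax : isMaximum 𝒞 d) :
    extremal 𝒞 := by
  have htop : 𝒞.ncard = binLe (Fintype.card α) d := by
    have := hmax Set.univ (toFinite _)
    rwa [trace_univ, ncard_univ, Nat.card_eq_fintype_card] at this
  have hSH : SH 𝒞 = {S : Set α | S.ncard ≤ d} := by
    ext S
    simp only [SH, Set.mem_setOf_eq]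
    constructor
    · intro hS
      by_contra hd
      push_neg at hd
      have hsub : {B : Set α | B ⊆ S} ⊆ trace 𝒞 S := by
        intro B hB
        obtain ⟨C, hC, hCS⟩ := hS B hB
        exact ⟨C, hC, hCS.symm⟩
      have := ncard_le_ncard hsub (toFinite _)
      rw [_root_.ncard_powerset, hmax S (toFinite _)] at this
      have := binLe_lt hd
      omega
    · intro hS
      have hsub : trace 𝒞 S ⊆ {B : Set α | B ⊆ S} := by
        rintro B ⟨C, _, rfl⟩
        exact Set.inter_subset_right
      have hcard : {B : Set α | B ⊆ S}.ncard ≤ (trace 𝒞 S).ncard := by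
        rw [_root_.ncard_powerset, hmax S (toFinite _), binLe_of_le hS]
      have heq := eq_of_subset_of_ncard_le hsub hcard (toFinite _)
      intro B hB
      have : B ∈ trace 𝒞 S := by rw [heq]; exact hB
      obtain ⟨C, hC, hCB⟩ := this
      exact ⟨C, hC, hCB.symm⟩
  rw [extremal, hSH, ncard_small_sets, htop]

lemma walk_length_ge [Fintype α] {𝒞 : Set (Set α)} {C₁ C₂ : 𝒞}
    (p : (oneInclusionGraph 𝒞).Walk C₁ C₂) :
    (symmDiff (C₁ : Set α) C₂).ncard ≤ p.length := by
  induction p with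
  | nil => simp [symmDiff_self]
  | @cons u v w h q ih =>
    have h' : (symmDiff (u : Set α) v).ncard = 1 := h
    have htri : symmDiff (u : Set α) w ⊆ symmDiff (u : Set α) v ∪ symmDiff (v : Set α) w :=
      symmDiff_triangle (u : Set α) v w
    have := (ncard_le_ncard htri (toFinite _)).trans (ncard_union_le _ _)
    rw [SimpleGraph.Walk.length_cons]
    omega

lemma exists_walk_length [Fintype α] {𝒞 : Set (Set α)} (hext : extremal 𝒞) :
    ∀ k (C₁ C₂ : 𝒞), (symmDiff (C₁ : Set α) C₂).ncard = k →
      ∃ p : (oneInclusionGraph 𝒞).Walk C₁ C₂, p.length = k := by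
  intro k
  induction k with
  | zero =>
    intro C₁ C₂ h
    have hv : (C₁ : Set α) = C₂ := by
      have h0 := (ncard_eq_zero (toFinite _)).mp h
      exact symmDiff_eq_bot.mp (by rw [h0]; rfl)
    have : C₁ = C₂ := Subtype.ext hv
    subst this
    exact ⟨SimpleGraph.Walk.nil, rfl⟩
  | succ k ih =>
    intro C₁ C₂ h
    have hne : (C₁ : Set α) ≠ C₂ := by
      intro he
      rw [he, symmDiff_self] at h
      simp at h
    obtain ⟨x, hx, hmem⟩ := exists_step (𝒞.ncard + (symmDiff (C₁ : Set α) C₂).ncard) 𝒞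
      C₁ C₂ le_rfl hext C₁.2 C₂.2 hne
    set D : 𝒞 := ⟨symmDiff (C₁ : Set α) {x}, hmem⟩ with hD
    have hadj : (oneInclusionGraph 𝒞).Adj C₁ D := by
      show (symmDiff (C₁ : Set α) (symmDiff (C₁ : Set α) {x})).ncard = 1
      rw [symmDiff_symmDiff_cancel_left]
      exact ncard_singleton x
    have hcount : (symmDiff (D : Set α) C₂).ncard = k := by
      have he : symmDiff (symmDiff (C₁ : Set α) {x}) (C₂ : Set α)
          = symmDiff (C₁ : Set α) C₂ \ {x} := by
        rw [symmDiff_assoc, symmDiff_comm ({x} : Set α) (C₂ : Set α), ← symmDiff_assoc,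
          symmDiff_singleton_of_mem hx]
      show (symmDiff (symmDiff (C₁ : Set α) {x}) (C₂ : Set α)).ncard = k
      rw [he, ncard_diff_singleton_of_mem hx, h]
      omega
    obtain ⟨q, hq⟩ := ih D C₂ hcount
    exact ⟨SimpleGraph.Walk.cons hadj q, by rw [SimpleGraph.Walk.length_cons, hq]⟩


/-- Warmuth–Kuzmin: in a finite maximum class, graph distance in the one-inclusion
graph equals Hamming distance; in particular the graph is connected. -/
theorem oneInclusion_dist_eq_hamming [Fintype α] (𝒞 : Set (Set α)) (d : ℕ)
    (hmax : isMaximum 𝒞 d) :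
    ∀ C₁ C₂ : 𝒞, (oneInclusionGraph 𝒞).Reachable C₁ C₂ ∧
      (oneInclusionGraph 𝒞).dist C₁ C₂ = (symmDiff (C₁ : Set α) (C₂ : Set α)).ncard := by
  intro C₁ C₂
  have hext : extremal 𝒞 := maximum_extremal hmax
  obtain ⟨p, hp⟩ := exists_walk_length hext _ C₁ C₂ rfl
  have hreach : (oneInclusionGraph 𝒞).Reachable C₁ C₂ := ⟨p⟩
  refine ⟨hreach, le_antisymm ?_ ?_⟩
  · exact hp ▸ SimpleGraph.dist_le p
  · obtain ⟨q, hq⟩ := hreach.exists_walk_length_eq_dist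
    exact hq ▸ walk_length_ge q
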